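/- If S, V, I solve the reduced controlled SVIR system with measurable controls u₀(t) ∈ [0,1], u₁(t) ∈ [0,1], nonnegative initial data with S₀+V₀+I₀ ≤ 1, then S(t)+V(t)+I(t) ≤ 1 for all t ≥ 0. -/

import Mathlib

/-- For the reduced controlled SVIR system with admissible controls and
nonnegative solutions, if S(0)+V(0)+I(0) ≤ 1 then S(t)+V(t)+I(t) ≤ 1 for all
t ≥ 0. -/
theorem svir_sum_le_one
    (S V I u₀ u₁ : ℝ → ℝ) (β₀ γ γ₁ μ ε : ℝ)
    (hβ₀ : 0 < β₀) (hγ : 0 < γ) (hγ₁ : 0 < γ₁) (hμ : 0 < μ)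
    (hε0 : 0 ≤ ε) (hε1 : ε ≤ 1)
    (hu₀meas : Measurable u₀) (hu₁meas : Measurable u₁)
    (hu₀ : ∀ t, u₀ t ∈ Set.Icc (0:ℝ) 1) (hu₁ : ∀ t, u₁ t ∈ Set.Icc (0:ℝ) 1)
    (hSpos : ∀ t, 0 ≤ S t) (hVpos : ∀ t, 0 ≤ V t) (hIpos : ∀ t, 0 ≤ I t)
    (hS : Differentiable ℝ S) (hV : Differentiable ℝ V) (hI : Differentiable ℝ I)
    (hSode : ∀ t, deriv S t =
      -(β₀ * (1 - u₀ t)) * S t * I t - u₁ t * S t + μ - μ * S t)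
    (hVode : ∀ t, deriv V t =
      u₁ t * S t - ε * (β₀ * (1 - u₀ t)) * V t * I t - γ₁ * V t - μ * V t)
    (hIode : ∀ t, deriv I t =
      β₀ * (1 - u₀ t) * S t * I t + ε * (β₀ * (1 - u₀ t)) * V t * I t
        - (γ + μ) * I t)
    (hinit : S 0 + V 0 + I 0 ≤ 1) :
    ∀ t : ℝ, 0 ≤ t → S t + V t + I t ≤ 1 := by
  set N : ℝ → ℝ := fun t => S t + V t + I t with hN
  have hNdiff : Differentiable ℝ N := ((hS.add hV).add hI)
  have hNder : ∀ t, deriv N t = μ - μ * N t - γ₁ * V t - γ * I t := by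
    intro t
    have : deriv N t = deriv S t + deriv V t + deriv I t := by
      simp [hN, deriv_add, (hS t).add (hV t), hS t, hV t, hI t]
    rw [this, hSode t, hVode t, hIode t]
    simp only [hN]
    ring
  set f : ℝ → ℝ := fun t => (N t - 1) * Real.exp (μ * t) with hf
  have hfdiff : Differentiable ℝ f := by
    exact (hNdiff.sub_const 1).mul ((differentiable_const μ).mul differentiable_id).exp
  have hfder : ∀ t, deriv f t = (-γ₁ * V t - γ * I t) * Real.exp (μ * t) := by
    intro t
    have h1 : HasDerivAt (fun t => Real.exp (μ * t)) (μ * Real.exp (μ * t)) t := by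
      have := (Real.hasDerivAt_exp (μ * t)).comp t
        ((hasDerivAt_id t).const_mul μ)
      exact (by simpa [mul_comm] using this : HasDerivAt (Real.exp ∘ HMul.hMul μ) (μ * Real.exp (μ * t)) t)
    have h2 : HasDerivAt (fun t => N t - 1) (deriv N t) t :=
      ((hNdiff t).hasDerivAt).sub_const 1
    have h3 := h2.mul h1
    rw [show f = ((fun t => N t - 1) * fun t => Real.exp (μ * t)) from rfl, h3.deriv, hNder t]
    ring
  have hanti : AntitoneOn f (Set.Ici (0:ℝ)) := by
    apply antitoneOn_of_deriv_nonpos (convex_Ici 0) hfdiff.continuous.continuousOn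
      (hfdiff.differentiableOn)
    intro t _
    rw [hfder t]
    have := Real.exp_pos (μ * t)
    have h1 : -γ₁ * V t - γ * I t ≤ 0 := by
      have := hVpos t; have := hIpos t
      nlinarith [hγ₁.le, hγ.le]
    nlinarith
  intro t ht
  have h0 : f t ≤ f 0 := hanti Set.self_mem_Ici ht ht
  have hf0 : f 0 ≤ 0 := by
    simp only [hf, hN, mul_zero, Real.exp_zero, mul_one]
    linarith
  have : (N t - 1) * Real.exp (μ * t) ≤ 0 := le_trans h0 hf0
  have hexp := Real.exp_pos (μ * t)
  have h2 : N t ≤ 1 := by nlinarith [this]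
  simpa [hN] using h2
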